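/- In the polynomial ring ℂ[t₁, t₂, t₃, t₄, y₁, y₂, y₃, y₄], the element y₃² does not belong to the ideal I = (y₁ − 1, (y₂ − t₄y₃)², (y₂ − t₄y₃)y₃, y₃³, y₄ − y₃²). -/
import Mathlib


open MvPolynomial

noncomputable section

/-- The quotient ring `ℂ[x]/(x³)`. -/
abbrev Raux : Type := Polynomial ℂ ⧸ Ideal.span {(Polynomial.X : Polynomial ℂ) ^ 3}

noncomputable def xaux : Raux := Ideal.Quotient.mk _ Polynomial.X

lemma xaux_cube : xaux ^ 3 = 0 := by
  show Ideal.Quotient.mk _ Polynomial.X ^ 3 = 0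
  rw [← map_pow, Ideal.Quotient.eq_zero_iff_mem]
  exact Ideal.subset_span rfl

lemma xaux_sq_ne : xaux ^ 2 ≠ 0 := by
  show Ideal.Quotient.mk _ Polynomial.X ^ 2 ≠ 0
  rw [← map_pow, Ne, Ideal.Quotient.eq_zero_iff_mem, Ideal.mem_span_singleton]
  intro h
  have h2 : (Polynomial.X : Polynomial ℂ) ^ 2 ≠ 0 := pow_ne_zero _ Polynomial.X_ne_zero
  have := Polynomial.natDegree_le_of_dvd h h2
  simp [Polynomial.natDegree_X_pow] at this

noncomputable def faux : Fin 8 → Raux :=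
  fun i => if i = 4 then 1 else if i = 6 then xaux else if i = 7 then xaux ^ 2 else 0

/-- **Remark 2.13(v) of David–Hertling, equation (2.14).** In
`ℂ[t₁,t₂,t₃,t₄,y₁,y₂,y₃,y₄]` (variables indexed `0,…,7`, with `tᵢ = X (i−1)` and
`yⱼ = X (3+j)`), the element `y₃²` does not belong to the ideal
`I = (y₁ − 1, (y₂ − t₄y₃)², (y₂ − t₄y₃)y₃, y₃³, y₄ − y₃²)`. -/
theorem y3_sq_not_mem_ideal :
    (X 6 : MvPolynomial (Fin 8) ℂ) ^ 2 ∉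
      Ideal.span {(X 4 : MvPolynomial (Fin 8) ℂ) - 1,
        (X 5 - X 3 * X 6) ^ 2,
        (X 5 - X 3 * X 6) * X 6,
        (X 6 : MvPolynomial (Fin 8) ℂ) ^ 3,
        X 7 - X 6 ^ 2} := by
  intro hmem
  have hle : Ideal.span {(X 4 : MvPolynomial (Fin 8) ℂ) - 1,
        (X 5 - X 3 * X 6) ^ 2,
        (X 5 - X 3 * X 6) * X 6,
        (X 6 : MvPolynomial (Fin 8) ℂ) ^ 3,
        X 7 - X 6 ^ 2} ≤ RingHom.ker (aeval faux).toRingHom := by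
    rw [Ideal.span_le]
    intro p hp
    simp only [Set.mem_insert_iff, Set.mem_singleton_iff] at hp
    rcases hp with h | h | h | h | h <;> subst h <;>
      simp [RingHom.mem_ker, faux, xaux_cube]
  have h0 := hle hmem
  rw [RingHom.mem_ker] at h0
  simp only [AlgHom.toRingHom_eq_coe, RingHom.coe_coe, map_pow, aeval_X] at h0
  have hf : faux 6 = xaux := by rfl
  rw [hf] at h0
  exact xaux_sq_ne h0
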